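/- Let (L,B) be a unimodular integral lattice of rank 10 and let R ⊆ L be a sublattice of rank 9 on which B is nondegenerate and whose discriminant group disc(R) is isomorphic to (ℤ/7ℤ)³. Then the saturation R̄ of R in L is an overlattice of R of index exactly 7, i.e. the index [R̄ : R] of R in R̄ equals 7. -/

import Mathlib

open TensorProduct

noncomputable section

/-- The natural map `N → ℚ ⊗[ℤ] N`, `x ↦ 1 ⊗ x`. -/
def toQ (N : Type) [AddCommGroup N] : N →ₗ[ℤ] ℚ ⊗[ℤ] N :=
  TensorProduct.mk ℤ ℚ N 1

/-- The dual lattice `N* = {x ∈ N ⊗ ℚ : B_ℚ(x,y) ∈ ℤ for all y ∈ N}`. -/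
def dualLattice {N : Type} [AddCommGroup N]
    (B : LinearMap.BilinForm ℤ N) : Submodule ℤ (ℚ ⊗[ℤ] N) where
  carrier := {x | ∀ y : N, ∃ n : ℤ, B.baseChange ℚ x (toQ N y) = n}
  zero_mem' := fun y => ⟨0, by simp⟩
  add_mem' := by
    intro x x' hx hx' y
    obtain ⟨n, hn⟩ := hx y
    obtain ⟨n', hn'⟩ := hx' y
    exact ⟨n + n', by rw [map_add, LinearMap.add_apply, hn, hn']; push_cast; ring⟩
  smul_mem' := by
    intro c x hx y
    obtain ⟨n, hn⟩ := hx y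
    refine ⟨c * n, ?_⟩
    rw [← Int.cast_smul_eq_zsmul ℚ c x, map_smul, LinearMap.smul_apply, hn,
      smul_eq_mul]
    push_cast; ring

/-- `disc(N) = N*/N`, the discriminant group of a lattice. -/
abbrev disc {N : Type} [AddCommGroup N] (B : LinearMap.BilinForm ℤ N) :=
  (dualLattice B) ⧸ ((LinearMap.range (toQ N)).comap (dualLattice B).subtype)

/-- The saturation (primitive closure) `S̄ = {x ∈ L : n • x ∈ S for some n ≥ 1}`. -/
def saturation {L : Type} [AddCommGroup L] (S : Submodule ℤ L) :
    Submodule ℤ L where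
  carrier := {x | ∃ n : ℤ, 1 ≤ n ∧ n • x ∈ S}
  zero_mem' := ⟨1, le_refl 1, by simp⟩
  add_mem' := by
    rintro x y ⟨n, hn, hnx⟩ ⟨m, hm, hmy⟩
    refine ⟨n * m, one_le_mul_of_one_le_of_one_le hn hm, ?_⟩
    have : (n * m) • (x + y) = m • (n • x) + n • (m • y) := by
      rw [smul_add, mul_comm n m, mul_smul, mul_comm m n, mul_smul]
    rw [this]
    exact S.add_mem (S.smul_mem m hnx) (S.smul_mem n hmy)
  smul_mem' := by
    rintro c x ⟨n, hn, hnx⟩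
    refine ⟨n, hn, ?_⟩
    rw [smul_comm]
    exact S.smul_mem c hnx


/-! ### Auxiliary lemmas -/

section aux
open Submodule

lemma span_smul_basis_eq_pi {m : ℕ} (a : Fin m → ℤ) :
    span ℤ (Set.range fun i => a i • (Pi.single i 1 : Fin m → ℤ)) =
      Submodule.pi Set.univ (fun i => Ideal.span {a i}) := by
  apply le_antisymm
  · rw [span_le]
    rintro _ ⟨i, rfl⟩
    intro j _
    rcases eq_or_ne j i with rfl | hji
    · simp [Pi.single_apply, Ideal.mem_span_singleton]
    · simp [Pi.single_apply, hji]
  · intro g hg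
    have hge : g = ∑ j : Fin m, g j • Pi.single j 1 := by
      ext k
      simp [Finset.sum_apply, Pi.single_apply]
    rw [hge]
    refine Submodule.sum_mem _ fun j _ => ?_
    obtain ⟨cc, hc⟩ := Ideal.mem_span_singleton'.mp (hg j (Set.mem_univ j))
    have h2 : g j • (Pi.single j 1 : Fin m → ℤ) = cc • (a j • Pi.single j 1) := by
      rw [smul_smul, hc]
    rw [h2]
    exact Submodule.smul_mem _ _ (subset_span ⟨j, rfl⟩)

lemma card_quot_span_smul {W : Type} [AddCommGroup W] [Module ℤ W] {m : ℕ}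
    (c : Module.Basis (Fin m) ℤ W) (a : Fin m → ℤ) :
    Nat.card (W ⧸ span ℤ (Set.range fun i => a i • c i)) = ∏ i, (a i).natAbs := by
  classical
  have hmap : Submodule.map ((c.equivFun : W ≃ₗ[ℤ] (Fin m → ℤ)) : W →ₗ[ℤ] (Fin m → ℤ))
      (span ℤ (Set.range fun i => a i • c i)) =
      Submodule.pi Set.univ (fun i => Ideal.span {a i}) := by
    rw [Submodule.map_span, ← Set.range_comp, ← span_smul_basis_eq_pi a]
    congr 1
    apply congrArg
    funext i
    show c.equivFun (a i • c i) = _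
    ext j
    simp [Module.Basis.equivFun_apply, Module.Basis.repr_self, Finsupp.single_apply, Pi.single_apply, eq_comm]
  have e1 := Submodule.Quotient.equiv (span ℤ (Set.range fun i => a i • c i)) _
    (c.equivFun : W ≃ₗ[ℤ] (Fin m → ℤ)) hmap
  have e2 := Submodule.quotientPi (fun i : Fin m => (Ideal.span {a i} : Submodule ℤ ℤ))
  rw [Nat.card_eq_of_bijective e1 e1.bijective, Nat.card_eq_of_bijective e2 e2.bijective,
    Nat.card_pi]
  refine Finset.prod_congr rfl fun i _ => ?_
  exact Eq.trans (Nat.card_eq_of_bijective (Int.quotientSpanEquivZMod (a i))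
    (EquivLike.bijective _)) (Nat.card_zmod _)

variable {R₀ : Type} [CommRing R₀]

lemma card_quot_comap {A B : Type} [AddCommGroup A] [Module R₀ A] [AddCommGroup B] [Module R₀ B]
    (f : A →ₗ[R₀] B) (hf : Function.Surjective f) (q : Submodule R₀ B) :
    Nat.card (B ⧸ q) = Nat.card (A ⧸ q.comap f) := by
  have hs : Function.Surjective (q.mkQ.comp f) := (mkQ_surjective q).comp hf
  have e := LinearMap.quotKerEquivOfSurjective _ hs
  have hk : LinearMap.ker (q.mkQ.comp f) = q.comap f := by
    rw [LinearMap.ker_comp, Submodule.ker_mkQ]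
  have e2 := Submodule.quotEquivOfEq _ _ hk
  rw [← Nat.card_eq_of_bijective e e.bijective]
  exact Nat.card_eq_of_bijective e2 e2.bijective

lemma card_quot_mul {W : Type} [AddCommGroup W] [Module R₀ W] (N M : Submodule R₀ W)
    (h : N ≤ M) :
    Nat.card (↥M ⧸ N.comap M.subtype) * Nat.card (W ⧸ M) = Nat.card (W ⧸ N) := by
  have h' : N.toAddSubgroup ≤ M.toAddSubgroup := h
  have hmul := AddSubgroup.relIndex_mul_index h'
  have h1 : N.toAddSubgroup.relIndex M.toAddSubgroup
      = Nat.card (↥M ⧸ N.comap M.subtype) := rfl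
  have h2 : M.toAddSubgroup.index = Nat.card (W ⧸ M) := rfl
  have h3 : N.toAddSubgroup.index = Nat.card (W ⧸ N) := rfl
  rw [h1, h2, h3] at hmul
  exact hmul

end aux

section lemA
variable {S : Type} [AddCommGroup S]

lemma exists_smul_eq_toQ (x : ℚ ⊗[ℤ] S) :
    ∃ n : ℤ, n ≠ 0 ∧ ∃ s : S, (n : ℚ) • x = toQ S s := by
  induction x using TensorProduct.induction_on with
  | zero => exact ⟨1, one_ne_zero, 0, by simp⟩
  | tmul q s =>
    refine ⟨(q.den : ℤ), by exact_mod_cast q.den_nz, q.num • s, ?_⟩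
    rw [TensorProduct.smul_tmul', smul_eq_mul]
    push_cast
    rw [mul_comm, Rat.mul_den_eq_num]
    show _ = (1:ℚ) ⊗ₜ[ℤ] (q.num • s)
    rw [← TensorProduct.smul_tmul, Int.cast_smul_eq_zsmul ℚ q.num (1:ℚ) |>.symm]
    norm_num
  | add x y hx hy =>
    obtain ⟨n, hn, s, hs⟩ := hx
    obtain ⟨m, hm, t, ht⟩ := hy
    refine ⟨n * m, mul_ne_zero hn hm, m • s + n • t, ?_⟩
    rw [map_add, smul_add]
    push_cast
    rw [mul_smul, smul_comm (n:ℚ) (m:ℚ) x, hs, mul_comm (n:ℚ) (m:ℚ), mul_smul,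
      smul_comm (m:ℚ) (n:ℚ) y, ht, Int.cast_smul_eq_zsmul ℚ, Int.cast_smul_eq_zsmul ℚ,
      ← map_smul, ← map_smul]

lemma lin_eq_zero_of_toQ {g : (ℚ ⊗[ℤ] S) →ₗ[ℚ] ℚ} (h : ∀ y : S, g (toQ S y) = 0) :
    g = 0 := by
  apply LinearMap.ext
  intro z
  obtain ⟨n, hn, s, hs⟩ := exists_smul_eq_toQ z
  have h2 : (n : ℚ) • g z = 0 := by rw [← map_smul, hs, h s]
  simpa [smul_eq_mul, hn] using h2

lemma disc_equiv {ι : Type} [Fintype ι] [DecidableEq ι] (bS : Module.Basis ι ℤ S)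
    (C : LinearMap.BilinForm ℤ S) (hC : ∀ x : S, (∀ y : S, C x y = 0) → x = 0) :
    Nonempty ((disc C) ≃ₗ[ℤ] (Module.Dual ℤ S ⧸ LinearMap.range C)) := by
  classical
  set Cq := C.baseChange ℚ with hCq
  have hQS : ∀ s y : S, Cq (toQ S s) (toQ S y) = (C s y : ℚ) := by
    intro s y
    show Cq ((1:ℚ) ⊗ₜ[ℤ] s) ((1:ℚ) ⊗ₜ[ℤ] y) = _
    rw [LinearMap.BilinForm.baseChange_tmul]
    simp
  have hsep : Cq.Nondegenerate := by
    haveI : Module.Finite ℚ (ℚ ⊗[ℤ] S) := Module.Finite.of_basis (bS.baseChange ℚ)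
    refine LinearMap.BilinForm.Nondegenerate.ofSeparatingLeft ?_
    intro x hx
    obtain ⟨n, hn, s, hs⟩ := exists_smul_eq_toQ x
    have hs0 : s = 0 := by
      apply hC
      intro y
      have : (C s y : ℚ) = 0 := by
        rw [← hQS, ← hs, map_smul, LinearMap.smul_apply, hx (toQ S y), smul_zero]
      exact_mod_cast this
    have : (n:ℚ) • x = 0 := by rw [hs, hs0, map_zero]
    simpa [hn] using this
  haveI : Module.Finite ℚ (ℚ ⊗[ℤ] S) := Module.Finite.of_basis (bS.baseChange ℚ)
  have hval : ∀ (x : ℚ ⊗[ℤ] S), x ∈ dualLattice C → ∀ y : S,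
      ((Cq x (toQ S y)).num : ℚ) = Cq x (toQ S y) := by
    intro x hx y
    obtain ⟨n, hn⟩ := hx y
    rw [hn, Rat.num_intCast]
  have hadd : ∀ (x : ℚ ⊗[ℤ] S) (hx : x ∈ dualLattice C) (y z : S),
      (Cq x (toQ S (y + z))).num = (Cq x (toQ S y)).num + (Cq x (toQ S z)).num := by
    intro x hx y z
    have : ((Cq x (toQ S (y+z))).num : ℚ)
        = ((Cq x (toQ S y)).num : ℚ) + ((Cq x (toQ S z)).num : ℚ) := by
      rw [hval x hx, hval x hx, hval x hx, map_add, map_add]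
    exact_mod_cast this
  have hsmul : ∀ (x : ℚ ⊗[ℤ] S) (hx : x ∈ dualLattice C) (c : ℤ) (y : S),
      (Cq x (toQ S (c • y))).num = c * (Cq x (toQ S y)).num := by
    intro x hx c y
    have : ((Cq x (toQ S (c • y))).num : ℚ) = ((c : ℚ)) * ((Cq x (toQ S y)).num : ℚ) := by
      rw [hval x hx, hval x hx, map_smul, map_zsmul, zsmul_eq_mul]
    exact_mod_cast this
  let gl : ↥(dualLattice C) →ₗ[ℤ] Module.Dual ℤ S :=
  { toFun := fun x =>
    { toFun := fun y => (Cq x.1 (toQ S y)).num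
      map_add' := fun y z => hadd x.1 x.2 y z
      map_smul' := fun c y => hsmul x.1 x.2 c y }
    map_add' := by
      intro x x'
      apply LinearMap.ext; intro y
      show (Cq (x.1 + x'.1) (toQ S y)).num = (Cq x.1 (toQ S y)).num + (Cq x'.1 (toQ S y)).num
      have : ((Cq (x.1 + x'.1) (toQ S y)).num : ℚ)
          = ((Cq x.1 (toQ S y)).num : ℚ) + ((Cq x'.1 (toQ S y)).num : ℚ) := by
        rw [hval _ (Submodule.add_mem _ x.2 x'.2), hval _ x.2, hval _ x'.2,
          map_add, LinearMap.add_apply]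
      exact_mod_cast this
    map_smul' := by
      intro c x
      apply LinearMap.ext; intro y
      show (Cq (c • x.1) (toQ S y)).num = c * (Cq x.1 (toQ S y)).num
      have : ((Cq (c • x.1) (toQ S y)).num : ℚ) = (c : ℚ) * ((Cq x.1 (toQ S y)).num : ℚ) := by
        rw [hval _ (Submodule.smul_mem _ c x.2), hval _ x.2, map_zsmul,
          LinearMap.smul_apply, zsmul_eq_mul]
      exact_mod_cast this }
  have hglval : ∀ (x : ↥(dualLattice C)) (y : S), ((gl x y : ℤ) : ℚ) = Cq x.1 (toQ S y) :=
    fun x y => hval x.1 x.2 y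
  have hinj : Function.Injective gl := by
    rw [← LinearMap.ker_eq_bot]
    apply LinearMap.ker_eq_bot'.mpr
    intro x hx
    have hz : Cq x.1 = 0 := by
      apply lin_eq_zero_of_toQ
      intro y
      have h3 : ((gl x y : ℤ) : ℚ) = 0 := by
        rw [show gl x = 0 from hx]
        simp
      rw [hglval x y] at h3
      exact h3
    have : x.1 = 0 := hsep.1 x.1 (fun z => by rw [hz]; simp)
    exact Subtype.ext this
  have hsurj : Function.Surjective gl := by
    intro f
    set fq : (ℚ ⊗[ℤ] S) →ₗ[ℚ] ℚ := (bS.baseChange ℚ).constr ℚ (fun i => ((f (bS i) : ℤ) : ℚ))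
      with hfqdef
    have hfq : ∀ y : S, fq (toQ S y) = ((f y : ℤ) : ℚ) := by
      have hext : ((fq.restrictScalars ℤ).comp (toQ S) : S →ₗ[ℤ] ℚ)
          = (Algebra.linearMap ℤ ℚ).comp f := by
        apply bS.ext
        intro i
        show fq (toQ S (bS i)) = algebraMap ℤ ℚ (f (bS i))
        have h1 : toQ S (bS i) = (bS.baseChange ℚ) i := by
          rw [Module.Basis.baseChange_apply]; rfl
        rw [h1, Module.Basis.constr_basis]
        simp
      intro y
      have := LinearMap.congr_fun hext y
      simpa using this
    set x : ℚ ⊗[ℤ] S := (LinearMap.BilinForm.toDual Cq hsep).symm fq with hxdef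
    have hx : ∀ z, Cq x z = fq z := by
      intro z
      have h4 : Cq x z = (LinearMap.BilinForm.toDual Cq hsep) x z := by
        rw [LinearMap.BilinForm.toDual_def]
      rw [h4, hxdef, LinearEquiv.apply_symm_apply]
    have hmem : x ∈ dualLattice C := by
      intro y
      exact ⟨f y, by rw [hx, hfq]⟩
    refine ⟨⟨x, hmem⟩, ?_⟩
    apply LinearMap.ext; intro y
    show (Cq x (toQ S y)).num = f y
    rw [hx, hfq]
    exact Rat.num_intCast _
  let e : ↥(dualLattice C) ≃ₗ[ℤ] Module.Dual ℤ S := LinearEquiv.ofBijective gl ⟨hinj, hsurj⟩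
  have hQmem : ∀ s : S, toQ S s ∈ dualLattice C := fun s y =>
    ⟨C s y, by rw [← hCq]; exact hQS s y⟩
  have hgl_toQ : ∀ (s : S) (h : toQ S s ∈ dualLattice C), gl ⟨toQ S s, h⟩ = C s := by
    intro s h
    apply LinearMap.ext; intro y
    show (Cq (toQ S s) (toQ S y)).num = C s y
    rw [hQS]
    exact Rat.num_intCast _
  have hmap : Submodule.map (e : ↥(dualLattice C) →ₗ[ℤ] Module.Dual ℤ S) ((LinearMap.range (toQ S)).comap (dualLattice C).subtype)
      = LinearMap.range C := by
    apply le_antisymm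
    · rintro _ ⟨⟨x, hx⟩, hmem, rfl⟩
      obtain ⟨s, hs⟩ := hmem
      have hxs : x = toQ S s := hs.symm
      subst hxs
      exact ⟨s, (hgl_toQ s hx).symm⟩
    · rintro _ ⟨s, rfl⟩
      exact ⟨⟨toQ S s, hQmem s⟩, ⟨s, rfl⟩, hgl_toQ s (hQmem s)⟩
  exact ⟨Submodule.Quotient.equiv _ _ e hmap⟩

end lemA

set_option maxHeartbeats 2000000 in
/-- A unimodular integral lattice `(L,B)` of rank 10 with a rank-9 sublattice `R`
on which `B` is nondegenerate and with `disc(R) ≅ (ℤ/7ℤ)³ ` has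
`[R̄ : R] = 7` for the saturation `R̄` of `R` in `L`. -/
theorem fake_plane_stmt0
    (L : Type) [AddCommGroup L] [Module.Free ℤ L] [Module.Finite ℤ L]
    (B : LinearMap.BilinForm ℤ L)
    (hrank : Module.finrank ℤ L = 10)
    (hsymm : ∀ x y : L, B x y = B y x)
    (hunimod : Function.Bijective fun x : L => B x)
    (R : Submodule ℤ L)
    (hrankR : Module.finrank ℤ R = 9)
    (hnd : ∀ x : R, (∀ y : R, B (x : L) (y : L) = 0) → x = 0)
    (hdisc : Nonempty (disc (B.restrict R) ≃+ (ZMod 7 × ZMod 7 × ZMod 7))) :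
    R ≤ saturation R ∧
      Nat.card ((saturation R) ⧸ (R.comap (saturation R).subtype)) = 7 := by
  classical
  refine ⟨fun x hx => ⟨1, le_refl 1, by rwa [one_smul]⟩, ?_⟩
  -- Smith normal form for R ⊆ L
  have bL : Module.Basis (Fin 10) ℤ L := (Module.finBasis ℤ L).reindex (finCongr hrank)
  obtain ⟨n, ⟨bM, bN, f, a, hsnf⟩⟩ := Submodule.smithNormalForm bL R
  have hn : n = 9 := by
    have h1 : Module.finrank ℤ ↥R = n := by
      rw [Module.finrank_eq_card_basis bN, Fintype.card_fin]
    rw [h1] at hrankR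
    exact hrankR
  subst hn
  have ha : ∀ i, a i ≠ 0 := by
    intro i h
    apply Module.Basis.ne_zero bN i
    have h2 := hsnf i
    rw [h, zero_smul] at h2
    exact Subtype.ext h2
  set v : Fin 9 → L := fun i => bM (f i) with hv
  set Rb : Submodule ℤ L := Submodule.span ℤ (Set.range v) with hRb
  have hRspan : R = Submodule.span ℤ (Set.range fun i => a i • v i) := by
    have h1 : Submodule.map R.subtype ⊤ = R := by
      rw [Submodule.map_top, Submodule.range_subtype]
    rw [← h1, ← Module.Basis.span_eq bN, Submodule.map_span]
    congr 1
    rw [← Set.range_comp]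
    have h2 : (R.subtype ∘ bN) = fun i => a i • v i := funext fun i => hsnf i
    rw [h2]
  have hRleRb : R ≤ Rb := by
    rw [hRspan]
    apply Submodule.span_le.mpr
    rintro _ ⟨i, rfl⟩
    exact Submodule.smul_mem _ _ (Submodule.subset_span ⟨i, rfl⟩)
  have hsat : saturation R = Rb := by
    apply le_antisymm
    · intro x hx
      obtain ⟨m, hm, hmx⟩ := hx
      have hmx' : m • x ∈ Rb := hRleRb hmx
      have hrange : Set.range v = ⇑bM '' Set.range ⇑f := Set.range_comp ⇑bM ⇑f
      rw [hRb, hrange, Module.Basis.mem_span_image] at hmx' ⊢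
      rw [map_smul, Finsupp.support_smul_eq (by omega : m ≠ 0)] at hmx'
      exact hmx'
    · rw [hRb]
      apply Submodule.span_le.mpr
      rintro _ ⟨i, rfl⟩
      refine ⟨((a i).natAbs : ℤ), ?_, ?_⟩
      · rw [← Int.abs_eq_natAbs]
        exact Int.one_le_abs (ha i)
      · have hmem : a i • v i ∈ R := by
          rw [← hsnf i]; exact (bN i).2
        rcases Int.natAbs_eq (a i) with h | h
        · rw [← h]; exact hmem
        · rw [show ((a i).natAbs : ℤ) = -(a i) by omega, neg_smul]
          exact Submodule.neg_mem _ hmem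
  rw [hsat]
  -- index of R in Rb
  have hli : LinearIndependent ℤ v := bM.linearIndependent.comp f f.injective
  let c : Module.Basis (Fin 9) ℤ ↥Rb := Module.Basis.span hli
  have hc : ∀ i, (c i : L) = v i := fun i => congrArg Subtype.val (Module.Basis.span_apply hli i)
  have hcomapRb : R.comap Rb.subtype = Submodule.span ℤ (Set.range fun i => a i • c i) := by
    apply Submodule.map_injective_of_injective (Submodule.injective_subtype Rb)
    rw [Submodule.map_comap_subtype, inf_eq_right.mpr hRleRb, Submodule.map_span,
      ← Set.range_comp]
    have h2 : (Rb.subtype ∘ fun i => a i • c i) = fun i => a i • v i := by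
      funext i
      show ((a i • c i : ↥Rb) : L) = a i • v i
      rw [Submodule.coe_smul, hc]
    rw [h2, ← hRspan]
  have hcardRb : Nat.card (↥Rb ⧸ R.comap Rb.subtype) = ∏ i, (a i).natAbs := by
    rw [hcomapRb]
    exact card_quot_span_smul c a
  set P := ∏ i, (a i).natAbs with hP
  -- the map to the dual of R
  set φ : L →ₗ[ℤ] Module.Dual ℤ ↥R := (R.subtype.dualMap).comp (B : L →ₗ[ℤ] Module.Dual ℤ L)
    with hφdef
  set N : Submodule ℤ (Module.Dual ℤ ↥R) := Submodule.map φ R with hN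
  set M' : Submodule ℤ (Module.Dual ℤ ↥R) := LinearMap.range φ with hM'
  have hNM : N ≤ M' := by
    rintro g hg
    obtain ⟨x, hx, rfl⟩ := hg
    exact ⟨x, rfl⟩
  have hrangeC : LinearMap.range (B.restrict R) = N := by
    apply le_antisymm
    · rintro _ ⟨s, rfl⟩
      exact ⟨(s : L), s.2, rfl⟩
    · rintro _ ⟨x, hx, rfl⟩
      exact ⟨⟨x, hx⟩, rfl⟩
  -- discriminant group facts
  obtain ⟨e7⟩ := hdisc
  have hnd' : ∀ x : ↥R, (∀ y : ↥R, (B.restrict R) x y = 0) → x = 0 := fun x h => hnd x h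
  obtain ⟨E⟩ := disc_equiv bN (B.restrict R) hnd'
  have hcardN : Nat.card (Module.Dual ℤ ↥R ⧸ N) = 343 := by
    rw [← hrangeC, ← Nat.card_eq_of_bijective E E.bijective,
      Nat.card_eq_of_bijective e7 (EquivLike.bijective e7)]
    simp [Nat.card_prod, Nat.card_zmod]
  have h7disc : ∀ d : disc (B.restrict R), (7:ℤ) • d = 0 := by
    intro d
    apply e7.injective
    rw [map_zsmul, map_zero]
    obtain ⟨z1, z2, z3⟩ := e7 d
    have h1 : ((7:ℤ) : ZMod 7) = 0 := by decide
    show ((7:ℤ) • z1, (7:ℤ) • z2, (7:ℤ) • z3) = (0, 0, 0)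
    rw [zsmul_eq_mul, zsmul_eq_mul, zsmul_eq_mul, h1]
    simp
  have h7N : ∀ g : Module.Dual ℤ ↥R, (7:ℤ) • g ∈ N := by
    intro g
    rw [← hrangeC, ← Submodule.Quotient.mk_eq_zero, Submodule.Quotient.mk_smul]
    have h0 := h7disc (E.symm (Submodule.Quotient.mk g))
    calc (7:ℤ) • (Submodule.Quotient.mk g :
          Module.Dual ℤ ↥R ⧸ LinearMap.range (B.restrict R))
        = (7:ℤ) • E (E.symm (Submodule.Quotient.mk g)) := by rw [E.apply_symm_apply]
      _ = E ((7:ℤ) • E.symm (Submodule.Quotient.mk g)) := (map_zsmul E _ _).symm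
      _ = E 0 := by rw [h0]
      _ = 0 := map_zero E
  -- the image of the restriction map in the dual of R
  have hdm : ∀ i, R.subtype.dualMap (bM.coord (f i)) = a i • bN.dualBasis i := by
    intro i
    apply bN.ext
    intro j
    show bM.coord (f i) ↑(bN j) = (a i • bN.dualBasis i) (bN j)
    rw [hsnf j, map_smul, LinearMap.smul_apply, Module.Basis.dualBasis_apply_self,
      Module.Basis.coord_apply, Module.Basis.repr_self, Finsupp.single_apply]
    rcases eq_or_ne j i with rfl | hne
    · simp
    · have hfne : ¬ (f j = f i) := fun hfe => hne (f.injective hfe)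
      simp [hfne, hne]
  have hMspan : M' = Submodule.span ℤ (Set.range fun i => a i • bN.dualBasis i) := by
    have hrange_eq : M' = LinearMap.range (R.subtype.dualMap) := by
      rw [hM', hφdef, LinearMap.range_comp, LinearMap.range_eq_top.mpr hunimod.2,
        Submodule.map_top]
    rw [hrange_eq]
    apply le_antisymm
    · rintro _ ⟨g, rfl⟩
      have hg : R.subtype.dualMap g = ∑ i, g (bM (f i)) • (a i • bN.dualBasis i) := by
        apply bN.ext
        intro j
        show g ↑(bN j) = _
        rw [hsnf j, map_smul, LinearMap.sum_apply]
        have hterm : ∀ i, (g (bM (f i)) • (a i • bN.dualBasis i)) (bN j)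
            = g (bM (f i)) • (a i • (if j = i then (1:ℤ) else 0)) := by
          intro i
          rw [LinearMap.smul_apply, LinearMap.smul_apply, Module.Basis.dualBasis_apply_self]
        rw [Finset.sum_congr rfl (fun i _ => hterm i), Finset.sum_eq_single j]
        · simp [smul_eq_mul, mul_comm]
        · intro b _ hb
          rw [if_neg (fun h => hb h.symm)]
          simp
        · intro h
          exact absurd (Finset.mem_univ j) h
      rw [hg]
      exact Submodule.sum_mem _ fun i _ =>
        Submodule.smul_mem _ _ (Submodule.subset_span ⟨i, rfl⟩)
    · apply Submodule.span_le.mpr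
      rintro _ ⟨i, rfl⟩
      exact ⟨bM.coord (f i), hdm i⟩
  have hcardM : Nat.card (Module.Dual ℤ ↥R ⧸ M') = P := by
    rw [hMspan, hP]
    exact card_quot_span_smul bN.dualBasis a
  -- the two index chains
  have hchain1 := card_quot_mul N M' hNM
  set K : Submodule ℤ L := LinearMap.ker φ with hK
  have hcomapN : Submodule.comap φ N = R ⊔ K := by
    rw [hN, hK]
    exact Submodule.comap_map_eq φ R
  have hMN : Nat.card (↥M' ⧸ N.comap M'.subtype) = Nat.card (L ⧸ (R ⊔ K)) := by
    have hsr : Function.Surjective (φ.rangeRestrict) := LinearMap.surjective_rangeRestrict φ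
    have h := card_quot_comap (φ.rangeRestrict) hsr (N.comap M'.subtype)
    have hcc : Submodule.comap φ.rangeRestrict (Submodule.comap M'.subtype N) = R ⊔ K := by
      rw [← hcomapN, ← Submodule.comap_comp, LinearMap.subtype_comp_codRestrict]
    rw [hcc] at h
    exact h
  have hchain2 := card_quot_mul (R ⊔ K) (Rb ⊔ K) (sup_le_sup_right hRleRb K)
  -- K meets Rb trivially
  have hKRb : ∀ k : L, k ∈ K → k ∈ Rb → k = 0 := by
    intro k hk hkRb
    have hksat : k ∈ saturation R := by rw [hsat]; exact hkRb
    obtain ⟨m, hm, hmk⟩ := hksat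
    have hz : (⟨m • k, hmk⟩ : ↥R) = 0 := by
      apply hnd
      intro y
      show B (m • k) ↑y = 0
      have hφk : φ k = 0 := hk
      have hBk : B k ↑y = 0 := LinearMap.congr_fun hφk y
      rw [map_smul, LinearMap.smul_apply, hBk, smul_zero]
    have hmk0 : m • k = 0 := congrArg Subtype.val hz
    have hrepr : bM.repr k = 0 := by
      have h1 : m • bM.repr k = 0 := by rw [← map_smul, hmk0, map_zero]
      ext i
      have h2 := DFunLike.congr_fun h1 i
      rw [Finsupp.smul_apply] at h2
      have hm0 : m ≠ 0 := by omega
      simpa [smul_eq_mul, hm0] using h2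
    exact bM.repr.map_eq_zero_iff.mp hrepr
  -- relative index of R + K in Rb + K
  have hrel : Nat.card (↥(Rb ⊔ K) ⧸ (R ⊔ K).comap (Rb ⊔ K).subtype)
      = Nat.card (↥Rb ⧸ R.comap Rb.subtype) := by
    set q : Submodule ℤ ↥(Rb ⊔ K) := (R ⊔ K).comap (Rb ⊔ K).subtype with hq
    set u : ↥Rb →ₗ[ℤ] ↥(Rb ⊔ K) := Submodule.inclusion le_sup_left with hu
    set w : ↥Rb →ₗ[ℤ] (↥(Rb ⊔ K) ⧸ q) := q.mkQ.comp u with hw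
    have hwsurj : Function.Surjective w := by
      intro z
      obtain ⟨z0, rfl⟩ := Submodule.mkQ_surjective q z
      obtain ⟨y, hy, k, hk, hyk⟩ := Submodule.mem_sup.mp z0.2
      refine ⟨⟨y, hy⟩, ?_⟩
      show Submodule.Quotient.mk (u ⟨y, hy⟩) = Submodule.Quotient.mk z0
      rw [Submodule.Quotient.eq]
      show ((u ⟨y, hy⟩ - z0 : ↥(Rb ⊔ K)) : L) ∈ R ⊔ K
      have hcoe : ((u ⟨y, hy⟩ - z0 : ↥(Rb ⊔ K)) : L) = y - ↑z0 := rfl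
      have hyz : y - (z0 : L) = -k := by rw [← hyk]; abel
      rw [hcoe, hyz]
      exact Submodule.neg_mem _ (Submodule.mem_sup_right hk)
    have hwker : LinearMap.ker w = R.comap Rb.subtype := by
      ext x
      rw [LinearMap.mem_ker]
      constructor
      · intro hx0
        have hmemq : u x ∈ q := (Submodule.Quotient.mk_eq_zero q).mp hx0
        have hxRK : (x : L) ∈ R ⊔ K := hmemq
        obtain ⟨r, hr, k, hk, hrk⟩ := Submodule.mem_sup.mp hxRK
        have hkRb2 : k ∈ Rb := by
          have hkx : k = (x : L) - r := by rw [← hrk]; abel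
          rw [hkx]
          exact Submodule.sub_mem _ x.2 (hRleRb hr)
        have hk0 : k = 0 := hKRb k hk hkRb2
        show (x : L) ∈ R
        rw [← hrk, hk0, add_zero]
        exact hr
      · intro hxR
        have hmemq : u x ∈ q := Submodule.mem_sup_left hxR
        exact (Submodule.Quotient.mk_eq_zero q).mpr hmemq
    have e := w.quotKerEquivOfSurjective hwsurj
    have e2 := Submodule.quotEquivOfEq _ _ hwker
    rw [← Nat.card_eq_of_bijective e e.bijective,
      Nat.card_eq_of_bijective e2 e2.bijective]
  -- the quotient L / (Rb + K) is cyclic of order dividing 7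
  have h7L : ∀ x : L, (7:ℤ) • x ∈ R ⊔ K := by
    intro x
    have h1 : φ ((7:ℤ) • x) ∈ N := by rw [map_smul]; exact h7N (φ x)
    have h2 : (7:ℤ) • x ∈ Submodule.comap φ N := h1
    rwa [hcomapN] at h2
  have hdvd : Nat.card (L ⧸ (Rb ⊔ K)) ∣ 7 := by
    have hcard_compl : ((Finset.univ.image f)ᶜ : Finset (Fin 10)).card = 1 := by
      rw [Finset.card_compl, Finset.card_image_of_injective _ f.injective]
      simp
    obtain ⟨j₀, hj₀⟩ := Finset.card_eq_one.mp hcard_compl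
    have hjmem : ∀ j : Fin 10, j ∉ Finset.univ.image f → j = j₀ := by
      intro j hj
      have hmem : j ∈ (Finset.univ.image f)ᶜ := Finset.mem_compl.mpr hj
      rw [hj₀] at hmem
      exact Finset.mem_singleton.mp hmem
    set g : L ⧸ (Rb ⊔ K) := Submodule.Quotient.mk (bM j₀) with hg
    have hbMRb : ∀ j : Fin 10, j ≠ j₀ →
        (Submodule.Quotient.mk (bM j) : L ⧸ (Rb ⊔ K)) = 0 := by
      intro j hj
      rw [Submodule.Quotient.mk_eq_zero]
      have hjim : j ∈ Finset.univ.image f := by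
        by_contra hc
        exact hj (hjmem j hc)
      obtain ⟨i, _, hij⟩ := Finset.mem_image.mp hjim
      apply Submodule.mem_sup_left
      apply Submodule.subset_span
      exact ⟨i, by rw [hv]; show bM (f i) = bM j; rw [hij]⟩
    have hgen : ∀ z : L ⧸ (Rb ⊔ K), ∃ czz : ℤ, czz • g = z := by
      intro z
      obtain ⟨wx, rfl⟩ := Submodule.mkQ_surjective _ z
      refine ⟨bM.repr wx j₀, ?_⟩
      have hwx : (Rb ⊔ K).mkQ wx = ∑ j, bM.repr wx j •
          ((Rb ⊔ K).mkQ (bM j)) := by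
        conv_lhs => rw [← Module.Basis.sum_repr bM wx]
        rw [map_sum]
        exact Finset.sum_congr rfl fun j _ => by rw [map_smul]
      rw [hwx, Finset.sum_eq_single j₀]
      · rfl
      · intro b _ hb
        have hbz : ((Rb ⊔ K).mkQ (bM b)) = 0 := hbMRb b hb
        rw [hbz, smul_zero]
      · intro h
        exact absurd (Finset.mem_univ j₀) h
    have h7g : (7:ℕ) • g = 0 := by
      have : (7:ℕ) • g = (7:ℤ) • g := (natCast_zsmul g 7).symm
      rw [this, hg, ← Submodule.Quotient.mk_smul, Submodule.Quotient.mk_eq_zero]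
      exact (sup_le_sup_right hRleRb K) (h7L (bM j₀))
    have horder : addOrderOf g ∣ 7 := addOrderOf_dvd_of_nsmul_eq_zero h7g
    have htop : AddSubgroup.zmultiples g = ⊤ := by
      rw [AddSubgroup.eq_top_iff']
      intro z
      obtain ⟨czz, hczz⟩ := hgen z
      exact AddSubgroup.mem_zmultiples_iff.mpr ⟨czz, hczz⟩
    have hcardG : Nat.card (L ⧸ (Rb ⊔ K)) = addOrderOf g := by
      rw [← Nat.card_zmultiples g, htop]
      exact (Nat.card_congr (AddSubgroup.topEquiv).toEquiv).symm
    rw [hcardG]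
    exact horder
  -- assemble
  rw [hcardM, hcardN, hMN] at hchain1
  rw [hrel, hcardRb] at hchain2
  rw [← hchain2] at hchain1
  rw [hcardRb]
  set β := Nat.card (L ⧸ (Rb ⊔ K)) with hβdef
  have key : P * P * β = 343 := by ring_nf at hchain1 ⊢; linarith
  have hβ : β = 1 ∨ β = 7 := (Nat.Prime.eq_one_or_self_of_dvd (by norm_num) _ hdvd)
  rcases hβ with hβ1 | hβ7
  · rw [hβ1, mul_one] at key
    have hle : P ≤ 18 := by nlinarith
    interval_cases P <;> omega
  · rw [hβ7] at key
    have hle : P ≤ 7 := by nlinarith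
    interval_cases P <;> omega
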